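/- The quartic form f^{0,0,λ} = x³y + y³z + z³t + t³x + λ xyzt over an algebraically closed field k of characteristic zero is singular if and only if λ⁴ = 4⁴ = 256. -/
import Mathlib


open MvPolynomial

/-- A quartic form in `k[x,y,z,t]` is singular if its four partial derivatives have a common
zero in `k⁴ \ {0}`, i.e. the projective surface `V(f) ⊆ ℙ³(k)` has a singular point. -/
def MvPolynomial.IsSingularForm {k : Type*} [CommRing k] (f : MvPolynomial (Fin 4) k) : Prop :=
  ∃ p : Fin 4 → k, p ≠ 0 ∧ ∀ i : Fin 4, eval p (pderiv i f) = 0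

section aux

variable {k : Type*} [CommRing k]

private lemma ev0 (l : k) (p : Fin 4 → k) :
    eval p (pderiv 0 (X 0 ^ 3 * X 1 + X 1 ^ 3 * X 2 + X 2 ^ 3 * X 3 + X 3 ^ 3 * X 0 +
        C l * (X 0 * X 1 * X 2 * X 3) : MvPolynomial (Fin 4) k)) =
    3 * (p 0)^2 * p 1 + (p 3)^3 + l * (p 1 * p 2 * p 3) := by
  simp [pderiv_mul, pderiv_pow, pderiv_X, Pi.single_apply]
  ring

private lemma ev1 (l : k) (p : Fin 4 → k) :
    eval p (pderiv 1 (X 0 ^ 3 * X 1 + X 1 ^ 3 * X 2 + X 2 ^ 3 * X 3 + X 3 ^ 3 * X 0 +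
        C l * (X 0 * X 1 * X 2 * X 3) : MvPolynomial (Fin 4) k)) =
    (p 0)^3 + 3 * (p 1)^2 * p 2 + l * (p 0 * p 2 * p 3) := by
  simp [pderiv_mul, pderiv_pow, pderiv_X, Pi.single_apply]
  ring

private lemma ev2 (l : k) (p : Fin 4 → k) :
    eval p (pderiv 2 (X 0 ^ 3 * X 1 + X 1 ^ 3 * X 2 + X 2 ^ 3 * X 3 + X 3 ^ 3 * X 0 +
        C l * (X 0 * X 1 * X 2 * X 3) : MvPolynomial (Fin 4) k)) =
    (p 1)^3 + 3 * (p 2)^2 * p 3 + l * (p 0 * p 1 * p 3) := by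
  simp [pderiv_mul, pderiv_pow, pderiv_X, Pi.single_apply]
  ring

private lemma ev3 (l : k) (p : Fin 4 → k) :
    eval p (pderiv 3 (X 0 ^ 3 * X 1 + X 1 ^ 3 * X 2 + X 2 ^ 3 * X 3 + X 3 ^ 3 * X 0 +
        C l * (X 0 * X 1 * X 2 * X 3) : MvPolynomial (Fin 4) k)) =
    (p 2)^3 + 3 * (p 3)^2 * p 0 + l * (p 0 * p 1 * p 2) := by
  simp [pderiv_mul, pderiv_pow, pderiv_X, Pi.single_apply]
  ring

end aux

/-- the quartic form `f^{0,0,λ} = x³y + y³z + z³t + t³x + λxyzt` is singular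
iff `λ⁴ = 4⁴ = 256`. -/
theorem stmt_8 {k : Type*} [Field k] [IsAlgClosed k] [CharZero k] (l : k) :
    (X 0 ^ 3 * X 1 + X 1 ^ 3 * X 2 + X 2 ^ 3 * X 3 + X 3 ^ 3 * X 0 +
        C l * (X 0 * X 1 * X 2 * X 3) : MvPolynomial (Fin 4) k).IsSingularForm ↔
      l ^ 4 = 256 := by
  constructor
  · rintro ⟨p, hp, h⟩
    obtain ⟨a, b, c, d, h0, h1, h2, h3, hne⟩ :
        ∃ a b c d : k,
          3 * a^2 * b + d^3 + l * (b * c * d) = 0 ∧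
          a^3 + 3 * b^2 * c + l * (a * c * d) = 0 ∧
          b^3 + 3 * c^2 * d + l * (a * b * d) = 0 ∧
          c^3 + 3 * d^2 * a + l * (a * b * c) = 0 ∧
          ¬(a = 0 ∧ b = 0 ∧ c = 0 ∧ d = 0) := by
      refine ⟨p 0, p 1, p 2, p 3, ?_, ?_, ?_, ?_, ?_⟩
      · rw [← ev0 l p]; exact h 0
      · rw [← ev1 l p]; exact h 1
      · rw [← ev2 l p]; exact h 2
      · rw [← ev3 l p]; exact h 3
      · rintro ⟨e0, e1, e2, e3⟩
        exact hp (funext fun i => by fin_cases i <;> assumption)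
    have cube : ∀ x : k, x ^ 3 = 0 → x = 0 := fun x hx =>
      pow_eq_zero_iff (by norm_num : (3:ℕ) ≠ 0) |>.mp hx
    have ha : a ≠ 0 := by
      intro e
      have hc : c = 0 := cube c (by linear_combination h3 - (3*d^2 + l*b*c)*e)
      have hb : b = 0 := cube b (by linear_combination h2 - (3*c*d)*hc - (l*b*d)*e)
      have hd : d = 0 := cube d (by linear_combination h0 - (3*a^2 + l*c*d)*hb)
      exact hne ⟨e, hb, hc, hd⟩
    have hb : b ≠ 0 := by
      intro e
      have hd : d = 0 := cube d (by linear_combination h0 - (3*a^2 + l*c*d)*e)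
      have hc : c = 0 := cube c (by linear_combination h3 - (3*d*a)*hd - (l*a*c)*e)
      have ha' : a = 0 := cube a (by linear_combination h1 - (3*b^2 + l*a*d)*hc)
      exact hne ⟨ha', e, hc, hd⟩
    have hc : c ≠ 0 := by
      intro e
      have ha' : a = 0 := cube a (by linear_combination h1 - (3*b^2 + l*a*d)*e)
      have hd : d = 0 := cube d (by linear_combination h0 - (3*a*b)*ha' - (l*b*d)*e)
      have hb' : b = 0 := cube b (by linear_combination h2 - (3*c^2 + l*a*b)*hd)
      exact hne ⟨ha', hb', e, hd⟩
    have hd : d ≠ 0 := by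
      intro e
      have hb' : b = 0 := cube b (by linear_combination h2 - (3*c^2 + l*a*b)*e)
      have ha' : a = 0 := cube a (by linear_combination h1 - (3*b*c)*hb' - (l*c*a)*e)
      have hc' : c = 0 := cube c (by linear_combination h3 - (3*d^2 + l*b*c)*ha')
      exact hne ⟨ha', hb', hc', e⟩
    have k1 : 4 * (a^3*b) = -(l*(a*b*c*d)) := by
      linear_combination (27/20*a)*h0 - (1/20*b)*h1 + (3/20*c)*h2 - (9/20*d)*h3
    have k2 : 4 * (b^3*c) = -(l*(a*b*c*d)) := by
      linear_combination (27/20*b)*h1 - (1/20*c)*h2 + (3/20*d)*h3 - (9/20*a)*h0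
    have k3 : 4 * (c^3*d) = -(l*(a*b*c*d)) := by
      linear_combination (27/20*c)*h2 - (1/20*d)*h3 + (3/20*a)*h0 - (9/20*b)*h1
    have k4 : 4 * (d^3*a) = -(l*(a*b*c*d)) := by
      linear_combination (27/20*d)*h3 - (1/20*a)*h0 + (3/20*b)*h1 - (9/20*c)*h2
    have habcd : a * b * c * d ≠ 0 := by
      exact mul_ne_zero (mul_ne_zero (mul_ne_zero ha hb) hc) hd
    have key : 256 * (a*b*c*d)^4 = l^4 * (a*b*c*d)^4 := by
      calc 256 * (a*b*c*d)^4
          = (4*(a^3*b)) * (4*(b^3*c)) * (4*(c^3*d)) * (4*(d^3*a)) := by ring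
        _ = (-(l*(a*b*c*d))) * (-(l*(a*b*c*d))) * (-(l*(a*b*c*d))) * (-(l*(a*b*c*d))) := by
            rw [k1, k2, k3, k4]
        _ = l^4 * (a*b*c*d)^4 := by ring
    have hP : (a*b*c*d)^4 ≠ 0 := pow_ne_zero _ habcd
    exact (mul_right_cancel₀ hP key.symm)
  · intro hl4
    have hl : l ≠ 0 := by
      intro e; rw [e] at hl4; norm_num at hl4
    refine ⟨![1, -(l^3)/64, l^2/16, -l/4], ?_, ?_⟩
    · intro h
      have := congrFun h 0
      simp at this
    · intro i
      fin_cases i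
      · refine (ev0 l _).trans ?_
        simp only [Matrix.cons_val_zero, Matrix.cons_val_one, Matrix.head_cons,
          Matrix.cons_val_two, Matrix.tail_cons, Matrix.cons_val_three]
        linear_combination (l^3/4096) * hl4
      · refine (ev1 l _).trans ?_
        simp only [Matrix.cons_val_zero, Matrix.cons_val_one, Matrix.head_cons,
          Matrix.cons_val_two, Matrix.tail_cons, Matrix.cons_val_three]
        linear_combination (3*l^4/65536 - 1/256) * hl4
      · refine (ev2 l _).trans ?_
        simp only [Matrix.cons_val_zero, Matrix.cons_val_one, Matrix.head_cons,
          Matrix.cons_val_two, Matrix.tail_cons, Matrix.cons_val_three]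
        linear_combination (-(l^5)/262144) * hl4
      · refine (ev3 l _).trans ?_
        simp only [Matrix.cons_val_zero, Matrix.cons_val_one, Matrix.head_cons,
          Matrix.cons_val_two, Matrix.tail_cons, Matrix.cons_val_three]
        linear_combination (-3*l^2/4096) * hl4
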